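/- Let 0 < γ < 1, λ ∈ ℝ with λ ≠ 0, v₀ ∈ ℝ, and let b : [0, ∞) → ℝ be continuous. Define v(t) = v₀ E_γ(λ t^γ) + ∫_0^t b(t−s) s^{γ−1} E_{γ,γ}(λ s^γ) ds. Then v is continuous on [0, ∞), v(0) = v₀, and v satisfies the Volterra integral equation v(t) = v₀ + (1/Γ(γ)) ∫_0^t (t−s)^{γ−1} ( λ v(s) + b(s) ) ds for every t ≥ 0; that is, v solves the fractional ODE D_c^γ v = λ v + b(t) with v(0) = v₀. -/

import Mathlib

open MeasureTheory Set Filter intervalIntegral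
open scoped ENNReal Topology

/-- The Mittag-Leffler function `E_γ(z) = Σ_{n=0}^∞ z^n / Γ(γ n + 1)`. -/
noncomputable def mittagLeffler (γ z : ℝ) : ℝ :=
  ∑' n : ℕ, z ^ n / Real.Gamma (γ * n + 1)

/-- The two-parameter Mittag-Leffler function `E_{γ,ρ}(z) = Σ_{n=0}^∞ z^n / Γ(γ n + ρ)`. -/
noncomputable def mittagLeffler2 (γ ρ z : ℝ) : ℝ :=
  ∑' n : ℕ, z ^ n / Real.Gamma (γ * n + ρ)

lemma MLGamma_rpow_le {γ x : ℝ} (hγ0 : 0 < γ) (hγ1 : γ < 1) (hx : 1 - γ < x) :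
    Real.Gamma x * (x + γ - 1) ^ γ ≤ Real.Gamma (x + γ) := by
  have hx0 : 0 < x := by linarith
  have ha : (0:ℝ) < x + γ - 1 := by linarith
  have hb : (0:ℝ) < x + γ := by linarith
  have hconv := Real.convexOn_log_Gamma.2 (mem_Ioi.2 ha) (mem_Ioi.2 hb) hγ0.le
    (by linarith : (0:ℝ) ≤ 1 - γ) (by ring)
  have hpt : γ • (x + γ - 1) + (1 - γ) • (x + γ) = x := by
    simp only [smul_eq_mul]; ring
  rw [hpt] at hconv
  have hGb : Real.Gamma (x + γ) = (x + γ - 1) * Real.Gamma (x + γ - 1) := by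
    have := Real.Gamma_add_one ha.ne'
    rw [show x + γ - 1 + 1 = x + γ by ring] at this
    exact this
  have hGa_pos := Real.Gamma_pos_of_pos ha
  have hGb_pos := Real.Gamma_pos_of_pos hb
  have hGx_pos := Real.Gamma_pos_of_pos hx0
  have hlog : Real.log (Real.Gamma (x + γ - 1)) =
      Real.log (Real.Gamma (x + γ)) - Real.log (x + γ - 1) := by
    rw [hGb, Real.log_mul ha.ne' hGa_pos.ne']; ring
  simp only [Function.comp, smul_eq_mul] at hconv
  rw [hlog] at hconv
  -- hconv : log Γ x ≤ γ * (log Γ (x+γ) - log (x+γ-1)) + (1-γ) * log Γ (x+γ)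
  have key : Real.log (Real.Gamma x) + γ * Real.log (x + γ - 1) ≤
      Real.log (Real.Gamma (x + γ)) := by nlinarith [hconv]
  have := Real.exp_le_exp.2 key
  rwa [Real.exp_add, Real.exp_log hGx_pos, Real.exp_log hGb_pos,
    mul_comm γ, ← Real.rpow_def_of_pos ha] at this

lemma ML_summable {γ ρ : ℝ} (hγ0 : 0 < γ) (hγ1 : γ < 1) (hρ : 0 < ρ) (x : ℝ) :
    Summable (fun n : ℕ => x ^ n / Real.Gamma (γ * n + ρ)) := by
  have htend : Tendsto (fun n : ℕ => (γ * n + ρ + γ - 1) ^ γ) atTop atTop := by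
    apply (tendsto_rpow_atTop hγ0).comp
    apply tendsto_atTop_mono (f := fun n : ℕ => γ * n + (ρ + γ - 1))
      (fun n => by ring_nf; exact le_refl _)
    exact tendsto_atTop_add_const_right _ _
      ((tendsto_natCast_atTop_atTop (R := ℝ)).const_mul_atTop hγ0)
  apply summable_of_ratio_norm_eventually_le (r := 1/2) (by norm_num)
  filter_upwards [htend.eventually_ge_atTop (2 * |x|),
    (tendsto_natCast_atTop_atTop (R := ℝ)).const_mul_atTop hγ0
      |>.eventually_ge_atTop 1] with n hn hn1
  have hq : (1:ℝ) - γ < γ * n + ρ := by linarith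
  have hq0 : (0:ℝ) < γ * n + ρ := by linarith
  have hq1 : (0:ℝ) < γ * (n + 1) + ρ := by push_cast; nlinarith
  have hkey := MLGamma_rpow_le hγ0 hγ1 hq
  have hG1 := Real.Gamma_pos_of_pos hq0
  have hG2 := Real.Gamma_pos_of_pos hq1
  have hshift : γ * (↑n + 1) + ρ = γ * ↑n + ρ + γ := by ring
  rw [show ((n:ℝ) + 1) = ((n+1 : ℕ) : ℝ) by push_cast; ring] at hshift
  have hstep : 2 * |x| * Real.Gamma (γ * n + ρ) ≤ Real.Gamma (γ * (n+1 : ℕ) + ρ) := by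
    rw [hshift]
    calc 2 * |x| * Real.Gamma (γ * n + ρ)
        ≤ (γ * ↑n + ρ + γ - 1) ^ γ * Real.Gamma (γ * n + ρ) := by
          apply mul_le_mul_of_nonneg_right hn hG1.le
      _ ≤ Real.Gamma (γ * ↑n + ρ + γ) := by rw [mul_comm]; exact hkey
  have hG2' : 0 < Real.Gamma (γ * ((n:ℕ)+1 : ℕ) + ρ) := by
    rw [hshift]; exact Real.Gamma_pos_of_pos (by linarith)
  simp only [norm_div, norm_pow, Real.norm_eq_abs, abs_of_pos hG1, abs_of_pos hG2']
  rw [mul_div_assoc', div_le_div_iff₀ hG2' hG1, pow_succ]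
  have hxpow : (0:ℝ) ≤ |x| ^ n := pow_nonneg (abs_nonneg x) n
  nlinarith [hstep, mul_le_mul_of_nonneg_left hstep hxpow]

lemma ML_continuous {γ ρ : ℝ} (hγ0 : 0 < γ) (hγ1 : γ < 1) (hρ : 0 < ρ) :
    Continuous (mittagLeffler2 γ ρ) := by
  rw [continuous_iff_continuousAt]
  intro z
  have hR : |z| < |z| + 1 := by linarith
  have hcont : ContinuousOn (mittagLeffler2 γ ρ) (Icc (-(|z|+1)) (|z|+1)) := by
    unfold mittagLeffler2
    apply continuousOn_tsum (f := fun (n : ℕ) (y : ℝ) => y ^ n / Real.Gamma (γ * n + ρ))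
      (u := fun n : ℕ => (|z|+1) ^ n / Real.Gamma (γ * n + ρ))
    · exact fun n => (continuous_pow n).continuousOn.div_const _
    · exact ML_summable hγ0 hγ1 hρ _
    · intro n y hy
      have hG := Real.Gamma_pos_of_pos (by positivity : (0:ℝ) < γ * n + ρ)
      rw [norm_div, norm_pow, Real.norm_eq_abs, Real.norm_eq_abs, abs_of_pos hG]
      apply div_le_div_of_nonneg_right ?_ hG.le
      apply pow_le_pow_left₀ (abs_nonneg y)
      rw [abs_le]; exact ⟨hy.1, hy.2⟩
  exact hcont.continuousAt (Icc_mem_nhds (by cases abs_le.1 (le_refl |z|) with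
    | intro h1 h2 => linarith) (by have := le_abs_self z; linarith))

lemma ML_shift {γ ρ : ℝ} (hγ0 : 0 < γ) (hγ1 : γ < 1) (hρ : 0 < ρ) (x : ℝ) :
    mittagLeffler2 γ ρ x = 1 / Real.Gamma ρ + x * mittagLeffler2 γ (ρ + γ) x := by
  have hs : Summable (fun n : ℕ => x ^ n / Real.Gamma (γ * n + ρ)) :=
    ML_summable hγ0 hγ1 hρ x
  rw [mittagLeffler2, Summable.tsum_eq_zero_add hs]
  congr 1
  · norm_num
  · rw [mittagLeffler2, ← tsum_mul_left]
    apply tsum_congr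
    intro n
    have : γ * ((n:ℝ) + 1) + ρ = γ * n + (ρ + γ) := by ring
    push_cast
    rw [this, pow_succ]
    ring

lemma ML_real_beta {a b : ℝ} (ha : 0 < a) (hb : 0 < b) :
    ∫ x in (0:ℝ)..1, x ^ (a-1) * (1-x) ^ (b-1) =
      Real.Gamma a * Real.Gamma b / Real.Gamma (a+b) := by
  have hab : 0 < Real.Gamma (a + b) := Real.Gamma_pos_of_pos (by linarith)
  have h := Complex.Gamma_mul_Gamma_eq_betaIntegral
    (by simpa using ha : 0 < (Complex.ofReal a).re)
    (by simpa using hb : 0 < (Complex.ofReal b).re)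
  have key : (↑(∫ x in (0:ℝ)..1, x ^ (a-1) * (1-x) ^ (b-1)) : ℂ) =
      Complex.betaIntegral a b := by
    rw [Complex.betaIntegral, ← intervalIntegral.integral_ofReal]
    apply intervalIntegral.integral_congr
    intro x hx
    rw [uIcc_of_le (by norm_num : (0:ℝ) ≤ 1)] at hx
    push_cast
    rw [Complex.ofReal_cpow hx.1, Complex.ofReal_cpow (by linarith [hx.2] : (0:ℝ) ≤ 1 - x)]
    push_cast
    ring
  rw [← Complex.ofReal_add, Complex.Gamma_ofReal, Complex.Gamma_ofReal, Complex.Gamma_ofReal,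
    ← key] at h
  have h2 : ((Real.Gamma a * Real.Gamma b : ℝ) : ℂ) =
      ((Real.Gamma (a+b) * ∫ x in (0:ℝ)..1, x ^ (a-1) * (1-x) ^ (b-1) : ℝ) : ℂ) := by
    push_cast; exact h
  have h3 := Complex.ofReal_inj.1 h2
  field_simp
  linarith [h3]

lemma ML_integral_rpow_rpow {a b t : ℝ} (ha : 0 < a) (hb : 0 < b) (ht : 0 < t) :
    ∫ s in (0:ℝ)..t, s ^ (a-1) * (t-s) ^ (b-1) =
      Real.Gamma a * Real.Gamma b / Real.Gamma (a+b) * t ^ (a+b-1) := by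
  have h1 : ∫ x in (0:ℝ)..1, (fun s => s ^ (a-1) * (t-s) ^ (b-1)) (t * x) =
      t⁻¹ • ∫ x in (t*0:ℝ)..(t*1), x ^ (a-1) * (t-x) ^ (b-1) :=
    intervalIntegral.integral_comp_mul_left (fun s => s ^ (a-1) * (t-s) ^ (b-1)) ht.ne'
  rw [mul_zero, mul_one] at h1
  have h2 : ∫ x in (0:ℝ)..1, (fun s => s ^ (a-1) * (t-s) ^ (b-1)) (t * x) =
      t ^ (a-1) * t ^ (b-1) * ∫ x in (0:ℝ)..1, x ^ (a-1) * (1-x) ^ (b-1) := by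
    rw [← intervalIntegral.integral_const_mul]
    apply intervalIntegral.integral_congr
    intro x hx
    rw [uIcc_of_le (by norm_num : (0:ℝ) ≤ 1)] at hx
    simp only
    rw [show t - t * x = t * (1 - x) by ring, Real.mul_rpow ht.le hx.1,
      Real.mul_rpow ht.le (by linarith [hx.2])]
    ring
  have h4 : t⁻¹ * ∫ x in (0:ℝ)..t, x ^ (a-1) * (t-x) ^ (b-1) =
      t ^ (a-1) * t ^ (b-1) * ∫ x in (0:ℝ)..1, x ^ (a-1) * (1-x) ^ (b-1) := by
    rw [← smul_eq_mul, ← h1, h2]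
  have h3 : (∫ s in (0:ℝ)..t, s ^ (a-1) * (t-s) ^ (b-1)) =
      t * (t ^ (a-1) * t ^ (b-1)) * ∫ x in (0:ℝ)..1, x ^ (a-1) * (1-x) ^ (b-1) := by
    field_simp at h4
    linarith [h4]
  rw [h3, ML_real_beta ha hb]
  have hpow : t * (t ^ (a-1) * t ^ (b-1)) = t ^ (a+b-1) := by
    rw [← Real.rpow_add ht]
    nth_rewrite 1 [← Real.rpow_one t]
    rw [← Real.rpow_add ht]
    congr 1
    ring
  rw [hpow]; ring

lemma ML_ii_rpow_rpow {p q t : ℝ} (hp : 0 < p) (hq : 0 < q) (ht : 0 < t) :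
    IntervalIntegrable (fun s => s ^ (p-1) * (t-s) ^ (q-1)) volume 0 t := by
  have h1 : IntervalIntegrable (fun s => s ^ (p-1) * (t-s) ^ (q-1)) volume 0 (t/2) := by
    apply IntervalIntegrable.mul_continuousOn
    · exact intervalIntegral.intervalIntegrable_rpow' (by linarith)
    · apply ContinuousOn.rpow_const (by fun_prop)
      intro x hx
      rw [uIcc_of_le (by linarith : (0:ℝ) ≤ t/2)] at hx
      left; intro hcon
      have : x = t := by linarith [sub_eq_zero.1 hcon]
      linarith [hx.2, this]
  have h2 : IntervalIntegrable (fun s => s ^ (p-1) * (t-s) ^ (q-1)) volume (t/2) t := by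
    apply IntervalIntegrable.continuousOn_mul
    · have hbase : IntervalIntegrable (fun s : ℝ => s ^ (q-1)) volume 0 (t/2) :=
        intervalIntegral.intervalIntegrable_rpow' (by linarith)
      have := (hbase.comp_sub_left t).symm
      rw [show t - t/2 = t/2 by ring, sub_zero] at this
      exact this
    · apply ContinuousOn.rpow_const (by fun_prop)
      intro x hx
      rw [uIcc_of_le (by linarith : t/2 ≤ t)] at hx
      left; linarith [hx.1]
  exact h1.trans h2

lemma ML_tt {γ c lam t : ℝ} (hγ0 : 0 < γ) (hγ1 : γ < 1) (hc : 0 < c) (ht : 0 < t) :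
    ∫ s in (0:ℝ)..t, (t-s) ^ (γ-1) * (s ^ (c-1) * mittagLeffler2 γ c (lam * s ^ γ)) =
      Real.Gamma γ * (t ^ (γ+c-1) * mittagLeffler2 γ (c+γ) (lam * t ^ γ)) := by
  have hΓγ := Real.Gamma_pos_of_pos hγ0
  set g : ℕ → ℝ → ℝ :=
    fun n s => (lam ^ n / Real.Gamma (γ*n+c)) * (s ^ (γ*n+c-1) * (t-s) ^ (γ-1)) with hg
  have hmulpow : ∀ (l s : ℝ), 0 < s → ∀ n : ℕ, (l * s ^ γ) ^ n = l ^ n * s ^ (γ * n) := by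
    intro l s hs n
    rw [mul_pow, ← Real.rpow_natCast (s ^ γ) n, ← Real.rpow_mul hs.le]
  have halg : ∀ (l : ℝ) (n : ℕ),
      (l ^ n / Real.Gamma (γ*n+c)) *
        (Real.Gamma (γ*↑n+c) * Real.Gamma γ / Real.Gamma (γ*↑n+c+γ) * t ^ (γ*↑n+c+γ-1)) =
      Real.Gamma γ * t ^ (γ+c-1) * ((l * t ^ γ) ^ n / Real.Gamma (γ*↑n+(c+γ))) := by
    intro l n
    have hG := (Real.Gamma_pos_of_pos (show (0:ℝ) < γ*n+c by positivity)).ne'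
    have hG2 := (Real.Gamma_pos_of_pos (show (0:ℝ) < γ*n+(c+γ) by positivity)).ne'
    have h2 : t ^ (γ*(n:ℝ)+c+γ-1) = t ^ (γ*(n:ℝ)) * t ^ (γ+c-1) := by
      rw [← Real.rpow_add ht]; ring_nf
    rw [show γ*(n:ℝ)+(c+γ) = γ*(n:ℝ)+c+γ by ring] at hG2 ⊢
    rw [h2, hmulpow l t ht n]
    field_simp
  have hpt : ∀ s ∈ Ioc (0:ℝ) t,
      (t-s) ^ (γ-1) * (s ^ (c-1) * mittagLeffler2 γ c (lam * s ^ γ)) = ∑' n, g n s := by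
    intro s hs
    have hs0 : 0 < s := hs.1
    rw [mittagLeffler2, ← tsum_mul_left, ← tsum_mul_left]
    apply tsum_congr
    intro n
    have h2 : s ^ (γ*(n:ℝ)) * s ^ (c-1) = s ^ (γ*n+c-1) := by
      rw [← Real.rpow_add hs0]; ring_nf
    rw [hmulpow lam s hs0 n, hg]
    simp only
    rw [← h2]
    ring
  have hIntOn : ∀ n : ℕ, IntegrableOn (g n) (Ioc 0 t) volume := by
    intro n
    apply Integrable.const_mul
    exact (ML_ii_rpow_rpow (p := γ*n+c) (by positivity) hγ0 ht).1
  have hnorm : ∀ n : ℕ, (∫ s in Ioc (0:ℝ) t, ‖g n s‖) =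
      (|lam| ^ n / Real.Gamma (γ*n+c)) *
        (Real.Gamma (γ*↑n+c) * Real.Gamma γ / Real.Gamma (γ*↑n+c+γ) * t ^ (γ*↑n+c+γ-1)) := by
    intro n
    have hG := Real.Gamma_pos_of_pos (show (0:ℝ) < γ*n+c by positivity)
    have : (∫ s in Ioc (0:ℝ) t, ‖g n s‖) =
        ∫ s in Ioc (0:ℝ) t, (|lam| ^ n / Real.Gamma (γ*n+c)) * (s ^ (γ*n+c-1) * (t-s) ^ (γ-1)) := by
      apply setIntegral_congr_fun measurableSet_Ioc
      intro s hs
      have h1 : (0:ℝ) ≤ s ^ (γ*(n:ℝ)+c-1) := Real.rpow_nonneg hs.1.le _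
      have h2 : (0:ℝ) ≤ (t-s) ^ (γ-1) := Real.rpow_nonneg (by linarith [hs.2]) _
      rw [hg]
      simp only
      rw [norm_mul, norm_mul, norm_div, norm_pow, Real.norm_eq_abs, Real.norm_eq_abs,
        Real.norm_eq_abs, Real.norm_eq_abs, abs_of_pos hG, abs_of_nonneg h1, abs_of_nonneg h2]
    rw [this, MeasureTheory.integral_const_mul, ← intervalIntegral.integral_of_le ht.le,
      ML_integral_rpow_rpow (by positivity) hγ0 ht]
  have hSum : Summable (fun n => ∫ s in Ioc (0:ℝ) t, ‖g n s‖) := by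
    apply Summable.congr
      (f := fun n : ℕ => Real.Gamma γ * t ^ (γ+c-1) * ((|lam| * t ^ γ) ^ n / Real.Gamma (γ*↑n+(c+γ))))
    · exact (ML_summable hγ0 hγ1 (by positivity) (|lam| * t ^ γ)).mul_left _
    · intro n
      rw [hnorm n, halg]
  have hval : ∀ n : ℕ, (∫ s in Ioc (0:ℝ) t, g n s) =
      Real.Gamma γ * t ^ (γ+c-1) * ((lam * t ^ γ) ^ n / Real.Gamma (γ*↑n+(c+γ))) := by
    intro n
    rw [hg]
    simp only
    rw [MeasureTheory.integral_const_mul, ← intervalIntegral.integral_of_le ht.le,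
      ML_integral_rpow_rpow (by positivity) hγ0 ht, halg]
  calc ∫ s in (0:ℝ)..t, (t-s) ^ (γ-1) * (s ^ (c-1) * mittagLeffler2 γ c (lam * s ^ γ))
      = ∫ s in Ioc (0:ℝ) t, ∑' n, g n s := by
        rw [intervalIntegral.integral_of_le ht.le]
        exact setIntegral_congr_fun measurableSet_Ioc hpt
    _ = ∑' n, ∫ s in Ioc (0:ℝ) t, g n s := by
        rw [← MeasureTheory.integral_tsum_of_summable_integral_norm (fun n => hIntOn n) hSum]
    _ = ∑' n : ℕ, Real.Gamma γ * t ^ (γ+c-1) * ((lam * t ^ γ) ^ n / Real.Gamma (γ*↑n+(c+γ))) :=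
        tsum_congr hval
    _ = Real.Gamma γ * (t ^ (γ+c-1) * mittagLeffler2 γ (c+γ) (lam * t ^ γ)) := by
        rw [mittagLeffler2, ← tsum_mul_left, ← tsum_mul_left]
        apply tsum_congr; intro n; ring

lemma ML_triangle_swap {t : ℝ} (ht : 0 < t) {H : ℝ → ℝ → ℝ}
    (hInt : Integrable (fun p : ℝ × ℝ => if p.2 ≤ p.1 then H p.1 p.2 else 0)
      ((volume.restrict (Ioc 0 t)).prod (volume.restrict (Ioc 0 t)))) :
    ∫ s in (0:ℝ)..t, ∫ u in (0:ℝ)..s, H s u = ∫ u in (0:ℝ)..t, ∫ s in u..t, H s u := by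
  have h1 : ∀ s ∈ Ioc (0:ℝ) t, (∫ u in (0:ℝ)..s, H s u) =
      ∫ u in Ioc (0:ℝ) t, (if u ≤ s then H s u else 0) := by
    intro s hs
    rw [intervalIntegral.integral_of_le hs.1.le]
    have : (fun u => if u ≤ s then H s u else 0) = (Iic s).indicator (H s) := by
      funext u; simp [Set.indicator_apply]
    rw [this, MeasureTheory.integral_indicator measurableSet_Iic,
      Measure.restrict_restrict measurableSet_Iic]
    congr 1
    rw [Iic_inter_Ioc_of_le hs.2]
  have h2 : ∀ u ∈ Ioc (0:ℝ) t, (∫ s in Ioc (0:ℝ) t, (if u ≤ s then H s u else 0)) =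
      ∫ s in u..t, H s u := by
    intro u hu
    have : (fun s => if u ≤ s then H s u else 0) = (Ici u).indicator (fun s => H s u) := by
      funext s; simp [Set.indicator_apply]
    rw [this, MeasureTheory.integral_indicator measurableSet_Ici,
      Measure.restrict_restrict measurableSet_Ici]
    have hset : Ici u ∩ Ioc 0 t = Icc u t := by
      ext s; simp only [mem_inter_iff, mem_Ici, mem_Ioc, mem_Icc]
      constructor
      · rintro ⟨h1, _, h3⟩; exact ⟨h1, h3⟩
      · rintro ⟨h1, h2⟩; exact ⟨h1, lt_of_lt_of_le hu.1 h1, h2⟩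
    rw [hset, MeasureTheory.integral_Icc_eq_integral_Ioc,
      ← intervalIntegral.integral_of_le hu.2]
  calc ∫ s in (0:ℝ)..t, ∫ u in (0:ℝ)..s, H s u
      = ∫ s in Ioc (0:ℝ) t, ∫ u in Ioc (0:ℝ) t, (if u ≤ s then H s u else 0) := by
        rw [intervalIntegral.integral_of_le ht.le]
        exact setIntegral_congr_fun measurableSet_Ioc h1
    _ = ∫ u in Ioc (0:ℝ) t, ∫ s in Ioc (0:ℝ) t, (if u ≤ s then H s u else 0) :=
        MeasureTheory.integral_integral_swap hInt
    _ = ∫ u in Ioc (0:ℝ) t, ∫ s in u..t, H s u := setIntegral_congr_fun measurableSet_Ioc h2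
    _ = ∫ u in (0:ℝ)..t, ∫ s in u..t, H s u := (intervalIntegral.integral_of_le ht.le).symm

lemma ML_measurable_rpow_const (c : ℝ) : Measurable fun x : ℝ => x ^ c :=
  measurable_of_continuousOn_compl_singleton 0 (fun x hx =>
    (Real.continuousAt_rpow_const x c (Or.inl hx)).continuousWithinAt)

lemma ML_prod_integrable1 {γ t : ℝ} (hγ0 : 0 < γ) (hγ1 : γ < 1) (ht : 0 < t) {B e : ℝ → ℝ}
    (hB : Continuous B) (he : Measurable e) {Me : ℝ}
    (hMe : ∀ u ∈ Ioc (0:ℝ) t, |e u| ≤ Me * u ^ (γ-1)) :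
    Integrable (fun p : ℝ × ℝ => if p.2 ≤ p.1 then (t-p.1) ^ (γ-1) * (B (p.1-p.2) * e p.2) else 0)
      ((volume.restrict (Ioc 0 t)).prod (volume.restrict (Ioc 0 t))) := by
  obtain ⟨MB, hMB⟩ :=
    (isCompact_Icc (a := (0:ℝ)) (b := t)).exists_bound_of_continuousOn hB.continuousOn
  have hMB0 : 0 ≤ MB := le_trans (norm_nonneg _) (hMB 0 ⟨le_refl _, ht.le⟩)
  have hmeas : Measurable (fun p : ℝ × ℝ =>
      if p.2 ≤ p.1 then (t-p.1) ^ (γ-1) * (B (p.1-p.2) * e p.2) else 0) := by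
    apply Measurable.ite (measurableSet_le measurable_snd measurable_fst)
    · exact ((ML_measurable_rpow_const (γ-1)).comp (measurable_const.sub measurable_fst)).mul
        (((hB.measurable).comp (measurable_fst.sub measurable_snd)).mul
          (he.comp measurable_snd))
    · exact measurable_const
  have hf : Integrable (fun s : ℝ => (t-s) ^ (γ-1)) (volume.restrict (Ioc 0 t)) := by
    have h0 : IntervalIntegrable (fun s : ℝ => s ^ (γ-1)) volume 0 t :=
      intervalIntegral.intervalIntegrable_rpow' (by linarith)
    have := (h0.comp_sub_left t).symm
    rw [sub_zero, sub_self] at this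
    exact this.1
  have hg : Integrable (fun u : ℝ => u ^ (γ-1)) (volume.restrict (Ioc 0 t)) :=
    (intervalIntegral.intervalIntegrable_rpow' (r := γ-1) (by linarith)).1
  apply Integrable.mono' ((hf.mul_prod hg).const_mul (MB * Me)) hmeas.aestronglyMeasurable
  rw [Measure.prod_restrict]
  refine (ae_restrict_iff' (measurableSet_Ioc.prod measurableSet_Ioc)).2
    (Eventually.of_forall ?_)
  rintro ⟨s, u⟩ hp
  obtain ⟨hs, hu⟩ := (Set.mem_prod).1 hp
  have hts : (0:ℝ) ≤ (t-s) ^ (γ-1) := Real.rpow_nonneg (by linarith [hs.2]) _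
  have huu : (0:ℝ) ≤ u ^ (γ-1) := Real.rpow_nonneg hu.1.le _
  have hMe0 : 0 ≤ Me := by
    have h1 := hMe u hu
    have h2 : (0:ℝ) ≤ |e u| := abs_nonneg _
    nlinarith [Real.rpow_pos_of_pos hu.1 (γ-1)]
  simp only
  by_cases h : u ≤ s
  · rw [if_pos h, Real.norm_eq_abs, abs_mul, abs_mul, abs_of_nonneg hts]
    have hBb : |B (s-u)| ≤ MB := by
      have := hMB (s-u) ⟨by linarith, by linarith [hs.2, hu.1]⟩
      rwa [Real.norm_eq_abs] at this
    calc (t-s) ^ (γ-1) * (|B (s-u)| * |e u|)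
        ≤ (t-s) ^ (γ-1) * (MB * (Me * u ^ (γ-1))) := by
          apply mul_le_mul_of_nonneg_left _ hts
          exact mul_le_mul hBb (hMe u hu) (abs_nonneg _) hMB0
      _ = MB * Me * ((t-s) ^ (γ-1) * u ^ (γ-1)) := by ring
  · rw [if_neg h, norm_zero]
    positivity

lemma ML_prod_integrable2 {γ t : ℝ} (hγ0 : 0 < γ) (hγ1 : γ < 1) (ht : 0 < t) {B e : ℝ → ℝ}
    (hB : Continuous B) (he : Measurable e) {Me : ℝ}
    (hMe : ∀ u ∈ Ioc (0:ℝ) t, |e u| ≤ Me * u ^ (γ-1)) :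
    Integrable (fun p : ℝ × ℝ =>
        if p.2 ≤ p.1 then (p.1-p.2) ^ (γ-1) * B (t-p.1) * e p.2 else 0)
      ((volume.restrict (Ioc 0 t)).prod (volume.restrict (Ioc 0 t))) := by
  obtain ⟨MB, hMB⟩ :=
    (isCompact_Icc (a := (0:ℝ)) (b := t)).exists_bound_of_continuousOn hB.continuousOn
  have hMB0 : 0 ≤ MB := le_trans (norm_nonneg _) (hMB 0 ⟨le_refl _, ht.le⟩)
  have hMe0 : 0 ≤ Me := by
    have h1 := hMe t ⟨ht, le_refl _⟩
    have h2 : (0:ℝ) ≤ |e t| := abs_nonneg _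
    nlinarith [Real.rpow_pos_of_pos ht (γ-1)]
  have hmeas : Measurable (fun p : ℝ × ℝ =>
      if p.2 ≤ p.1 then (p.1-p.2) ^ (γ-1) * B (t-p.1) * e p.2 else 0) := by
    apply Measurable.ite (measurableSet_le measurable_snd measurable_fst)
    · exact (((ML_measurable_rpow_const (γ-1)).comp (measurable_fst.sub measurable_snd)).mul
        ((hB.measurable).comp (measurable_const.sub measurable_fst))).mul
        (he.comp measurable_snd)
    · exact measurable_const
  have h1f : AEStronglyMeasurable (fun p : ℝ × ℝ =>
      if p.2 ≤ p.1 then (p.1-p.2) ^ (γ-1) * B (t-p.1) * e p.2 else 0)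
      ((volume.restrict (Ioc 0 t)).prod (volume.restrict (Ioc 0 t))) :=
    hmeas.aestronglyMeasurable
  rw [MeasureTheory.integrable_prod_iff h1f]
  -- pointwise bound used repeatedly
  have hptw : ∀ r ∈ Ioc (0:ℝ) t, ∀ u ∈ Ioc (0:ℝ) t,
      ‖if u ≤ r then (r-u) ^ (γ-1) * B (t-r) * e u else 0‖ ≤
        (Iic r).indicator (fun u => MB * Me * (u ^ (γ-1) * (r-u) ^ (γ-1))) u := by
    intro r hr u hu
    by_cases h : u ≤ r
    · rw [if_pos h, indicator_of_mem (mem_Iic.2 h), Real.norm_eq_abs, abs_mul, abs_mul]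
      have hru : (0:ℝ) ≤ (r-u) ^ (γ-1) := Real.rpow_nonneg (by linarith) _
      have hBb : |B (t-r)| ≤ MB := by
        have := hMB (t-r) ⟨by linarith [hr.2], by linarith [hr.1]⟩
        rwa [Real.norm_eq_abs] at this
      rw [abs_of_nonneg hru]
      calc (r-u) ^ (γ-1) * |B (t-r)| * |e u|
          ≤ (r-u) ^ (γ-1) * MB * (Me * u ^ (γ-1)) := by
            apply mul_le_mul _ (hMe u hu) (abs_nonneg _)
            · positivity
            · exact mul_le_mul_of_nonneg_left hBb hru
        _ = MB * Me * (u ^ (γ-1) * (r-u) ^ (γ-1)) := by ring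
    · rw [if_neg h, norm_zero, indicator_of_notMem (fun hc => h (mem_Iic.1 hc))]
  constructor
  · refine (ae_restrict_iff' measurableSet_Ioc).2 (Eventually.of_forall ?_)
    intro r hr
    have hmaj : Integrable ((Iic r).indicator (fun u => MB * Me * (u ^ (γ-1) * (r-u) ^ (γ-1))))
        (volume.restrict (Ioc 0 t)) := by
      rw [MeasureTheory.integrable_indicator_iff measurableSet_Iic]
      unfold IntegrableOn
      rw [Measure.restrict_restrict measurableSet_Iic, Iic_inter_Ioc_of_le hr.2]
      exact ((ML_ii_rpow_rpow hγ0 hγ0 hr.1).1).const_mul _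
    apply Integrable.mono' hmaj
    · exact (hmeas.comp (measurable_prodMk_left (x := r))).aestronglyMeasurable
    · exact (ae_restrict_iff' measurableSet_Ioc).2
        (Eventually.of_forall (fun u hu => hptw r hr u hu))
  · have hmaj2 : Integrable (fun r : ℝ =>
        MB * Me * (Real.Gamma γ * Real.Gamma γ / Real.Gamma (γ+γ)) * r ^ (γ+γ-1))
        (volume.restrict (Ioc 0 t)) :=
      ((intervalIntegral.intervalIntegrable_rpow' (r := γ+γ-1) (by linarith)).1).const_mul _
    apply Integrable.mono' hmaj2 (h1f.norm.integral_prod_right')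
    refine (ae_restrict_iff' measurableSet_Ioc).2 (Eventually.of_forall ?_)
    intro r hr
    have hmaj : Integrable ((Iic r).indicator (fun u => MB * Me * (u ^ (γ-1) * (r-u) ^ (γ-1))))
        (volume.restrict (Ioc 0 t)) := by
      rw [MeasureTheory.integrable_indicator_iff measurableSet_Iic]
      unfold IntegrableOn
      rw [Measure.restrict_restrict measurableSet_Iic, Iic_inter_Ioc_of_le hr.2]
      exact ((ML_ii_rpow_rpow hγ0 hγ0 hr.1).1).const_mul _
    rw [Real.norm_eq_abs, abs_of_nonneg (integral_nonneg (fun u => norm_nonneg _))]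
    calc ∫ u in Ioc (0:ℝ) t, ‖if u ≤ r then (r-u) ^ (γ-1) * B (t-r) * e u else 0‖
        ≤ ∫ u in Ioc (0:ℝ) t,
            (Iic r).indicator (fun u => MB * Me * (u ^ (γ-1) * (r-u) ^ (γ-1))) u := by
          apply integral_mono_of_nonneg (Eventually.of_forall (fun u => norm_nonneg _)) hmaj
          exact (ae_restrict_iff' measurableSet_Ioc).2
            (Eventually.of_forall (fun u hu => hptw r hr u hu))
      _ = MB * Me * (Real.Gamma γ * Real.Gamma γ / Real.Gamma (γ+γ)) * r ^ (γ+γ-1) := by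
          rw [MeasureTheory.integral_indicator measurableSet_Iic,
            Measure.restrict_restrict measurableSet_Iic, Iic_inter_Ioc_of_le hr.2,
            ← intervalIntegral.integral_of_le hr.1.le, intervalIntegral.integral_const_mul,
            ML_integral_rpow_rpow hγ0 hγ0 hr.1]
          ring

lemma ML_continuousOn_conv {γ : ℝ} (hγ0 : 0 < γ) (hγ1 : γ < 1) {B k : ℝ → ℝ}
    (hB : Continuous B) (hk : Measurable k)
    (hkb : ∀ T, 0 < T → ∃ M, 0 ≤ M ∧ ∀ s ∈ Ioc (0:ℝ) T, |k s| ≤ M * s ^ (γ-1)) :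
    ContinuousOn (fun t => ∫ u in (0:ℝ)..t, B (t - u) * k u) (Ici 0) := by
  intro t₀ ht₀
  have ht₀0 : (0:ℝ) ≤ t₀ := ht₀
  set T := t₀ + 1 with hTdef
  have hT : 0 < T := by simp only [hTdef]; linarith
  set F : ℝ → ℝ → ℝ := fun t u => (Ioc (0:ℝ) t).indicator (fun u => B (t - u) * k u) u
    with hF
  have hw : ∀ t ∈ Ici (0:ℝ), (∫ u in (0:ℝ)..t, B (t-u) * k u) = ∫ u, F t u := by
    intro t ht
    rw [intervalIntegral.integral_of_le ht,
      ← MeasureTheory.integral_indicator measurableSet_Ioc]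
  obtain ⟨M, hM0, hM⟩ := hkb T hT
  obtain ⟨MB, hMB⟩ :=
    (isCompact_Icc (a := (0:ℝ)) (b := T)).exists_bound_of_continuousOn hB.continuousOn
  have hMB0 : 0 ≤ MB := le_trans (norm_nonneg _) (hMB 0 ⟨le_refl _, hT.le⟩)
  have key : Tendsto (fun t => ∫ u, F t u) (𝓝[Ici 0] t₀) (𝓝 (∫ u, F t₀ u)) := by
    apply MeasureTheory.tendsto_integral_filter_of_dominated_convergence
      (bound := (Ioc (0:ℝ) T).indicator (fun u => MB * (M * u ^ (γ-1))))
    · apply Eventually.of_forall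
      intro t
      apply (Measurable.indicator _ measurableSet_Ioc).aestronglyMeasurable
      exact (hB.comp (continuous_const.sub continuous_id)).measurable.mul hk
    · have hev : ∀ᶠ t in 𝓝[Ici 0] t₀, t < T :=
        Filter.Eventually.filter_mono nhdsWithin_le_nhds
          (isOpen_Iio.eventually_mem (show t₀ ∈ Iio T by simp [hTdef]))
      filter_upwards [hev, eventually_mem_nhdsWithin] with t htT ht0
      apply Eventually.of_forall
      intro u
      by_cases hu : u ∈ Ioc (0:ℝ) t
      · rw [hF]
        simp only
        rw [indicator_of_mem hu]
        have huT : u ∈ Ioc (0:ℝ) T := ⟨hu.1, le_trans hu.2 htT.le⟩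
        rw [indicator_of_mem huT]
        rw [Real.norm_eq_abs, abs_mul]
        apply mul_le_mul _ (hM u huT) (abs_nonneg _) hMB0
        have := hMB (t - u) ⟨by linarith [hu.2], by linarith [hu.1, htT.le, hu.2]⟩
        rwa [Real.norm_eq_abs] at this
      · rw [hF]
        simp only
        rw [indicator_of_notMem hu, norm_zero]
        apply Set.indicator_nonneg
        intro x hx
        have : (0:ℝ) ≤ x ^ (γ-1) := Real.rpow_nonneg hx.1.le _
        positivity
    · rw [MeasureTheory.integrable_indicator_iff measurableSet_Ioc]
      have hbase : IntegrableOn (fun u : ℝ => u ^ (γ-1)) (Ioc 0 T) volume :=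
        (intervalIntegral.intervalIntegrable_rpow' (by linarith)).1
      exact ((hbase.const_mul M).const_mul MB)
    · have h0 : ∀ᵐ (u : ℝ), u ≠ 0 := by
        simp [ae_iff]
      have h1 : ∀ᵐ (u : ℝ), u ≠ t₀ := by
        simp [ae_iff]
      filter_upwards [h0, h1] with u hu0 hut
      rcases lt_trichotomy u 0 with hneg | hzero | hpos
      · apply Tendsto.congr' (f₁ := fun _ => (0:ℝ))
        · apply Eventually.of_forall
          intro t
          rw [hF]; simp only
          rw [indicator_of_notMem (by simp only [mem_Ioc, not_and]; intro h; linarith)]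
        · rw [hF]; simp only
          rw [indicator_of_notMem (by simp only [mem_Ioc, not_and]; intro h; linarith)]
          exact tendsto_const_nhds
      · exact absurd hzero hu0
      · rcases lt_or_gt_of_ne hut with hlt | hgt
        · -- 0 < u < t₀
          have hev : ∀ᶠ t in 𝓝[Ici 0] t₀, u < t :=
            Filter.Eventually.filter_mono nhdsWithin_le_nhds
              (isOpen_Ioi.eventually_mem (show t₀ ∈ Ioi u from hlt))
          apply Tendsto.congr' (f₁ := fun t => B (t - u) * k u)
          · filter_upwards [hev] with t htu
            rw [hF]; simp only
            rw [indicator_of_mem (show u ∈ Ioc (0:ℝ) t from ⟨hpos, htu.le⟩)]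
          · rw [hF]; simp only
            rw [indicator_of_mem (show u ∈ Ioc (0:ℝ) t₀ from ⟨hpos, hlt.le⟩)]
            exact (((hB.comp (continuous_id.sub continuous_const)).mul
              continuous_const).tendsto t₀).mono_left nhdsWithin_le_nhds
        · -- t₀ < u
          have hev : ∀ᶠ t in 𝓝[Ici 0] t₀, t < u :=
            Filter.Eventually.filter_mono nhdsWithin_le_nhds
              (isOpen_Iio.eventually_mem (show t₀ ∈ Iio u from hgt))
          apply Tendsto.congr' (f₁ := fun _ => (0:ℝ))
          · filter_upwards [hev] with t htu
            rw [hF]; simp only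
            rw [indicator_of_notMem (by simp only [mem_Ioc, not_and]; intro h; linarith)]
          · rw [hF]; simp only
            rw [indicator_of_notMem (by simp only [mem_Ioc, not_and]; intro h; linarith)]
            exact tendsto_const_nhds
  rw [ContinuousWithinAt]
  rw [hw t₀ ht₀]
  apply Tendsto.congr' _ key
  filter_upwards [eventually_mem_nhdsWithin] with t ht
  exact (hw t ht).symm

/-- Solution formula for the linear fractional ODE `D_c^γ v = λ v + b(t)`, `v(0) = v₀`:
the function `v(t) = v₀ E_γ(λ t^γ) + ∫_0^t b(t−s) s^{γ−1} E_{γ,γ}(λ s^γ) ds` is continuous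
on `[0,∞)`, satisfies `v(0) = v₀`, and solves the associated Volterra integral equation
`v(t) = v₀ + (1/Γ(γ)) ∫_0^t (t−s)^{γ−1} (λ v(s) + b(s)) ds` for all `t ≥ 0`. -/
theorem linear_fode_mittagLeffler_solution
    (γ : ℝ) (hγ0 : 0 < γ) (hγ1 : γ < 1) (lam : ℝ) (hlam : lam ≠ 0)
    (v₀ : ℝ) (b : ℝ → ℝ) (hb : ContinuousOn b (Ici 0))
    (v : ℝ → ℝ)
    (hv : ∀ t : ℝ, v t = v₀ * mittagLeffler γ (lam * t ^ γ) +
        ∫ s in (0:ℝ)..t, b (t - s) * s ^ (γ - 1) * mittagLeffler2 γ γ (lam * s ^ γ)) :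
    ContinuousOn v (Ici 0) ∧ v 0 = v₀ ∧
    ∀ t : ℝ, 0 ≤ t →
      v t = v₀ + (1 / Real.Gamma γ) *
        ∫ s in (0:ℝ)..t, (t - s) ^ (γ - 1) * (lam * v s + b s) := by
  have hΓ : 0 < Real.Gamma γ := Real.Gamma_pos_of_pos hγ0
  set B : ℝ → ℝ := fun x => b (max x 0) with hBdef
  have hBcont : Continuous B :=
    hb.comp_continuous (continuous_id.max continuous_const) (fun x => mem_Ici.2 (le_max_right _ _))
  have hBb : ∀ x : ℝ, 0 ≤ x → B x = b x := by
    intro x hx; rw [hBdef]; simp only [max_eq_left hx]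
  have hml_eq : mittagLeffler γ = mittagLeffler2 γ 1 := rfl
  set e : ℝ → ℝ := fun s => s ^ (γ-1) * mittagLeffler2 γ γ (lam * s ^ γ) with hedef
  have hML2cont : ∀ ρ : ℝ, 0 < ρ → Continuous (fun s : ℝ => mittagLeffler2 γ ρ (lam * s ^ γ)) := by
    intro ρ hρ
    apply (ML_continuous hγ0 hγ1 hρ).comp
    apply continuous_const.mul
    rw [continuous_iff_continuousAt]; intro x
    exact Real.continuousAt_rpow_const x γ (Or.inr hγ0.le)
  have he_meas : Measurable e := (ML_measurable_rpow_const (γ-1)).mul (hML2cont γ hγ0).measurable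
  have he_bound : ∀ T, 0 < T → ∃ M, 0 ≤ M ∧ ∀ s ∈ Ioc (0:ℝ) T, |e s| ≤ M * s ^ (γ-1) := by
    intro T hT
    obtain ⟨M, hM⟩ := (isCompact_Icc (a := (0:ℝ)) (b := T)).exists_bound_of_continuousOn
      (hML2cont γ hγ0).continuousOn
    refine ⟨max M 0, le_max_right _ _, ?_⟩
    intro s hs
    rw [hedef]
    simp only
    rw [abs_mul, abs_of_nonneg (Real.rpow_nonneg hs.1.le _), mul_comm]
    apply mul_le_mul_of_nonneg_right _ (Real.rpow_nonneg hs.1.le _)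
    have := hM s ⟨hs.1.le, hs.2⟩
    rw [Real.norm_eq_abs] at this
    exact this.trans (le_max_left _ _)
  set w : ℝ → ℝ := fun s => ∫ u in (0:ℝ)..s, B (s-u) * e u with hwdef
  have hvw : ∀ t : ℝ, 0 ≤ t → v t = v₀ * mittagLeffler2 γ 1 (lam * t ^ γ) + w t := by
    intro t ht
    rw [hv t, hml_eq]
    congr 1
    apply intervalIntegral.integral_congr
    intro s hs
    rw [uIcc_of_le ht] at hs
    simp only
    rw [hBb (t-s) (by linarith [hs.2]), hedef, mul_assoc]
  have hw_cont : ContinuousOn w (Ici 0) :=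
    ML_continuousOn_conv hγ0 hγ1 hBcont he_meas he_bound
  have hcont : ContinuousOn v (Ici 0) := by
    apply ContinuousOn.congr
      (f := fun t => v₀ * mittagLeffler2 γ 1 (lam * t ^ γ) + w t)
    · exact (continuous_const.mul (hML2cont 1 one_pos)).continuousOn.add hw_cont
    · intro t ht; exact hvw t ht
  have hml0 : mittagLeffler2 γ 1 0 = 1 := by
    rw [mittagLeffler2, tsum_eq_single 0]
    · simp [Real.Gamma_one]
    · intro n hn; rw [zero_pow hn]; simp
  have hv0 : v 0 = v₀ := by
    rw [hvw 0 le_rfl, hwdef]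
    simp only [intervalIntegral.integral_same]
    rw [Real.zero_rpow hγ0.ne', mul_zero, hml0]
    ring
  refine ⟨hcont, hv0, ?_⟩
  intro t htnn
  rcases htnn.eq_or_lt with rfl | ht
  · rw [hv0, intervalIntegral.integral_same]; ring
  -- now 0 < t
  have hKi : IntervalIntegrable (fun s => (t-s) ^ (γ-1)) volume 0 t := by
    have h0 : IntervalIntegrable (fun s : ℝ => s ^ (γ-1)) volume 0 t :=
      intervalIntegral.intervalIntegrable_rpow' (by linarith)
    have := (h0.comp_sub_left t).symm
    rwa [sub_zero, sub_self] at this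
  have hI1 : IntervalIntegrable (fun s => (t-s) ^ (γ-1) * mittagLeffler2 γ 1 (lam * s ^ γ))
      volume 0 t := hKi.mul_continuousOn (hML2cont 1 one_pos).continuousOn
  have hI2 : IntervalIntegrable (fun s => (t-s) ^ (γ-1) * w s) volume 0 t := by
    apply hKi.mul_continuousOn
    apply hw_cont.mono
    rw [uIcc_of_le ht.le]
    exact fun x hx => hx.1
  have hI3 : IntervalIntegrable (fun s => (t-s) ^ (γ-1) * B s) volume 0 t :=
    hKi.mul_continuousOn hBcont.continuousOn
  -- split the integral
  have hsplit : (∫ s in (0:ℝ)..t, (t-s) ^ (γ-1) * (lam * v s + b s)) =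
      lam * v₀ * (∫ s in (0:ℝ)..t, (t-s) ^ (γ-1) * mittagLeffler2 γ 1 (lam * s ^ γ))
      + (lam * (∫ s in (0:ℝ)..t, (t-s) ^ (γ-1) * w s)
        + (∫ s in (0:ℝ)..t, (t-s) ^ (γ-1) * B s)) := by
    rw [← intervalIntegral.integral_const_mul, ← intervalIntegral.integral_const_mul,
      ← intervalIntegral.integral_add (hI2.const_mul lam) hI3,
      ← intervalIntegral.integral_add (hI1.const_mul (lam * v₀))
        ((hI2.const_mul lam).add hI3)]
    apply intervalIntegral.integral_congr
    intro s hs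
    rw [uIcc_of_le ht.le] at hs
    simp only
    rw [hvw s hs.1, ← hBb s hs.1]
    ring
  -- value of the first piece
  have hT1 : (∫ s in (0:ℝ)..t, (t-s) ^ (γ-1) * mittagLeffler2 γ 1 (lam * s ^ γ)) =
      Real.Gamma γ * (t ^ γ * mittagLeffler2 γ (1+γ) (lam * t ^ γ)) := by
    have h00 := ML_tt (c := (1:ℝ)) (lam := lam) hγ0 hγ1 one_pos ht
    rw [show (γ:ℝ) + 1 - 1 = γ by ring] at h00
    rw [← h00]
    apply intervalIntegral.integral_congr
    intro s _
    norm_num [Real.rpow_zero]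
  -- Fubini for the convolution piece
  obtain ⟨Me, hMe0, hMe⟩ := he_bound t ht
  have hswap1 := ML_triangle_swap ht (H := fun s u => (t-s) ^ (γ-1) * (B (s-u) * e u))
    (ML_prod_integrable1 hγ0 hγ1 ht hBcont he_meas hMe)
  have hswap2 := ML_triangle_swap ht (H := fun s u => (s-u) ^ (γ-1) * B (t-s) * e u)
    (ML_prod_integrable2 hγ0 hγ1 ht hBcont he_meas hMe)
  have hrefl : ∀ u : ℝ, (∫ s in u..t, (t-s) ^ (γ-1) * (B (s-u) * e u)) =
      ∫ s in u..t, (s-u) ^ (γ-1) * B (t-s) * e u := by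
    intro u
    have h0 := intervalIntegral.integral_comp_sub_left
      (a := u) (b := t) (fun r => (r-u) ^ (γ-1) * B (t-r) * e u) (t+u)
    rw [show t+u-t = u by ring, show t+u-u = t by ring] at h0
    rw [← h0]
    apply intervalIntegral.integral_congr
    intro x _
    simp only
    rw [show t+u-x-u = t-x by ring, show t-(t+u-x) = x-u by ring]
    ring
  have hT2 : (∫ s in (0:ℝ)..t, (t-s) ^ (γ-1) * w s) =
      ∫ s in (0:ℝ)..t, B (t-s) * (Real.Gamma γ *
        (s ^ (γ+γ-1) * mittagLeffler2 γ (γ+γ) (lam * s ^ γ))) := by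
    have step1 : (∫ s in (0:ℝ)..t, (t-s) ^ (γ-1) * w s) =
        ∫ s in (0:ℝ)..t, ∫ u in (0:ℝ)..s, (t-s) ^ (γ-1) * (B (s-u) * e u) := by
      apply intervalIntegral.integral_congr
      intro s _
      simp only
      rw [hwdef]
      simp only
      rw [← intervalIntegral.integral_const_mul]
    have step2 : (∫ u in (0:ℝ)..t, ∫ s in u..t, (t-s) ^ (γ-1) * (B (s-u) * e u)) =
        ∫ u in (0:ℝ)..t, ∫ s in u..t, (s-u) ^ (γ-1) * B (t-s) * e u := by
      apply intervalIntegral.integral_congr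
      intro u _
      exact hrefl u
    rw [step1, hswap1, step2, ← hswap2]
    rw [intervalIntegral.integral_of_le ht.le, intervalIntegral.integral_of_le ht.le]
    apply setIntegral_congr_fun measurableSet_Ioc
    intro s hs
    simp only
    have hpull : (∫ u in (0:ℝ)..s, (s-u) ^ (γ-1) * B (t-s) * e u) =
        B (t-s) * ∫ u in (0:ℝ)..s, (s-u) ^ (γ-1) * (u ^ (γ-1) *
          mittagLeffler2 γ γ (lam * u ^ γ)) := by
      rw [← intervalIntegral.integral_const_mul]
      apply intervalIntegral.integral_congr
      intro u _
      rw [hedef]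
      simp only
      ring
    rw [hpull, ML_tt hγ0 hγ1 hγ0 hs.1]
  -- value of the b piece (reflection)
  have hT3 : (∫ s in (0:ℝ)..t, (t-s) ^ (γ-1) * B s) =
      ∫ s in (0:ℝ)..t, B (t-s) * s ^ (γ-1) := by
    have h0 := intervalIntegral.integral_comp_sub_left
      (a := (0:ℝ)) (b := t) (fun s => (t-s) ^ (γ-1) * B s) t
    rw [sub_zero, sub_self] at h0
    rw [← h0]
    apply intervalIntegral.integral_congr
    intro x _
    simp only
    rw [show t-(t-x) = x by ring]
    ring
  -- combine the last two pieces into w t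
  have hIA : IntervalIntegrable (fun s => (B (t-s) * (Real.Gamma γ * lam *
      mittagLeffler2 γ (γ+γ) (lam * s ^ γ))) * s ^ (γ+γ-1)) volume 0 t := by
    apply IntervalIntegrable.continuousOn_mul
    · exact intervalIntegral.intervalIntegrable_rpow' (by linarith)
    · apply ContinuousOn.mul
      · exact (hBcont.comp (continuous_const.sub continuous_id)).continuousOn
      · exact (continuous_const.mul (hML2cont (γ+γ) (by linarith))).continuousOn
  have hIB : IntervalIntegrable (fun s => B (t-s) * s ^ (γ-1)) volume 0 t := by
    apply IntervalIntegrable.continuousOn_mul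
    · exact intervalIntegral.intervalIntegrable_rpow' (by linarith)
    · exact (hBcont.comp (continuous_const.sub continuous_id)).continuousOn
  have hClaimB : lam * (∫ s in (0:ℝ)..t, (t-s) ^ (γ-1) * w s)
      + (∫ s in (0:ℝ)..t, (t-s) ^ (γ-1) * B s) = Real.Gamma γ * w t := by
    have e1 : lam * (∫ s in (0:ℝ)..t, (t-s) ^ (γ-1) * w s) =
        ∫ s in (0:ℝ)..t, (B (t-s) * (Real.Gamma γ * lam *
          mittagLeffler2 γ (γ+γ) (lam * s ^ γ))) * s ^ (γ+γ-1) := by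
      rw [hT2, ← intervalIntegral.integral_const_mul]
      apply intervalIntegral.integral_congr
      intro s _
      ring
    rw [e1, hT3, ← intervalIntegral.integral_add hIA hIB, hwdef]
    simp only
    rw [← intervalIntegral.integral_const_mul,
      intervalIntegral.integral_of_le ht.le, intervalIntegral.integral_of_le ht.le]
    apply setIntegral_congr_fun measurableSet_Ioc
    intro s hs
    simp only
    rw [hedef]
    simp only
    rw [ML_shift hγ0 hγ1 hγ0 (lam * s ^ γ)]
    have hsg : s ^ (γ-1) * s ^ γ = s ^ (γ+γ-1) := by
      rw [← Real.rpow_add hs.1]; ring_nf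
    have h1 : Real.Gamma γ * (1 / Real.Gamma γ) = 1 := by
      field_simp
    linear_combination (-(B (t-s) * Real.Gamma γ * lam *
      mittagLeffler2 γ (γ+γ) (lam * s ^ γ))) * hsg - (B (t-s) * s ^ (γ-1)) * h1
  -- final assembly
  rw [hvw t ht.le, hsplit, hT1, hClaimB, ML_shift hγ0 hγ1 one_pos (lam * t ^ γ),
    Real.Gamma_one]
  field_simp
  ring
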